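/- arXiv:1712.10067 — 2 statements merged into one kernel-verified Lean document; each statement's English description precedes it below -/
import Mathlib

section
/- Let G(λ) = C(λE - A)⁻¹B + D be the transfer function with E invertible, and ε > 0 with ε‖D‖₂ < 1. Then the ε-spectral value set σ_ε(A,B,C,D,E) := ⋃{ spec(M(Δ),E) : Δ ∈ ℂ^{m×p}, ‖Δ‖₂ ≤ ε } equals spec(A,E) ∪ { λ ∈ ℂ \ spec(A,E) : ‖G(λ)‖₂ ≥ ε⁻¹ }. -/
set_option maxHeartbeats 1000000

open Matrix Filter Set

noncomputable def specNorm {p m : ℕ} (A : Matrix (Fin p) (Fin m) ℂ) : ℝ :=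
  ‖(Matrix.toEuclideanLin A).toContinuousLinearMap‖

noncomputable def pertSys {n m p : ℕ} (A : Matrix (Fin n) (Fin n) ℂ) (B : Matrix (Fin n) (Fin m) ℂ)
    (C : Matrix (Fin p) (Fin n) ℂ) (D : Matrix (Fin p) (Fin m) ℂ)
    (Δ : Matrix (Fin m) (Fin p) ℂ) : Matrix (Fin n) (Fin n) ℂ :=
  A + B * Δ * (1 - D * Δ)⁻¹ * C

noncomputable def svSet {n m p : ℕ} (ε : ℝ) (A : Matrix (Fin n) (Fin n) ℂ)
    (B : Matrix (Fin n) (Fin m) ℂ) (C : Matrix (Fin p) (Fin n) ℂ)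
    (D : Matrix (Fin p) (Fin m) ℂ) (E : Matrix (Fin n) (Fin n) ℂ) : Set ℂ :=
  {z | ∃ Δ : Matrix (Fin m) (Fin p) ℂ, specNorm Δ ≤ ε ∧ (z • E - pertSys A B C D Δ).det = 0}

noncomputable def transferFn {n m p : ℕ} (A : Matrix (Fin n) (Fin n) ℂ)
    (B : Matrix (Fin n) (Fin m) ℂ) (C : Matrix (Fin p) (Fin n) ℂ)
    (D : Matrix (Fin p) (Fin m) ℂ) (E : Matrix (Fin n) (Fin n) ℂ) (z : ℂ) :
    Matrix (Fin p) (Fin m) ℂ :=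
  C * (z • E - A)⁻¹ * B + D

section Aux

open scoped Matrix.Norms.L2Operator
open Metric

lemma specNorm_eq_l2norm {p m : ℕ} (A : Matrix (Fin p) (Fin m) ℂ) :
    specNorm A = ‖A‖ := rfl

lemma det_one_sub_ne_zero_of_norm_lt {k : ℕ} (X : Matrix (Fin k) (Fin k) ℂ)
    (h : ‖X‖ < 1) : (1 - X).det ≠ 0 := by
  intro hdet
  obtain ⟨v, hv0, hv⟩ := (Matrix.exists_mulVec_eq_zero_iff).2 hdet
  have hvv : X *ᵥ v = v := by
    have h1 : v - X *ᵥ v = 0 := by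
      simpa [Matrix.sub_mulVec, Matrix.one_mulVec] using hv
    exact (sub_eq_zero.mp h1).symm
  set x : EuclideanSpace ℂ (Fin k) := (EuclideanSpace.equiv (Fin k) ℂ).symm v with hx
  have hxn : 0 < ‖x‖ := by
    rw [norm_pos_iff]
    simpa [hx] using hv0
  have hb := Matrix.l2_opNorm_mulVec X x
  rw [show X *ᵥ (x : Fin k → ℂ) = v from hvv] at hb
  have : ‖x‖ ≤ ‖X‖ * ‖x‖ := hb
  nlinarith

lemma det_key {n m p : ℕ} (M : Matrix (Fin n) (Fin n) ℂ) (B : Matrix (Fin n) (Fin m) ℂ)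
    (C : Matrix (Fin p) (Fin n) ℂ) (D : Matrix (Fin p) (Fin m) ℂ) (Δ : Matrix (Fin m) (Fin p) ℂ)
    (hM : M.det ≠ 0) (hS : (1 - D * Δ).det ≠ 0) :
    (M - B * Δ * (1 - D * Δ)⁻¹ * C).det * (1 - Δ * D).det
      = M.det * (1 - Δ * (C * M⁻¹ * B + D)).det := by
  set S : Matrix (Fin p) (Fin p) ℂ := 1 - D * Δ with hSdef
  have hMi : M * M⁻¹ = 1 := mul_nonsing_inv M (isUnit_iff_ne_zero.mpr hM)
  have hSi : S * S⁻¹ = 1 := mul_nonsing_inv S (isUnit_iff_ne_zero.mpr hS)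
  have h1 : M - B * Δ * S⁻¹ * C = M * (1 - M⁻¹ * (B * Δ * S⁻¹ * C)) := by
    rw [Matrix.mul_sub, mul_one, ← Matrix.mul_assoc, hMi, Matrix.one_mul]
  have h2 : (1 - M⁻¹ * (B * Δ * S⁻¹ * C)).det
      = (1 - (Δ * S⁻¹ * C) * (M⁻¹ * B)).det := by
    have e : M⁻¹ * (B * Δ * S⁻¹ * C) = (M⁻¹ * B) * (Δ * S⁻¹ * C) := by
      simp only [Matrix.mul_assoc]
    rw [e, Matrix.det_one_sub_mul_comm]
  set Y : Matrix (Fin m) (Fin m) ℂ := (Δ * S⁻¹ * C) * (M⁻¹ * B) with hYdef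
  have hΔS : Δ * S⁻¹ - Δ * (D * (Δ * S⁻¹)) = Δ := by
    have step1 : Δ * S⁻¹ - Δ * (D * (Δ * S⁻¹)) = (Δ - Δ * (D * Δ)) * S⁻¹ := by
      rw [Matrix.sub_mul]; simp only [Matrix.mul_assoc]
    have step2 : Δ - Δ * (D * Δ) = Δ * S := by
      rw [hSdef, Matrix.mul_sub, Matrix.mul_one]
    rw [step1, step2, Matrix.mul_assoc, hSi, Matrix.mul_one]
  have h3 : (1 - Δ * D) * (1 - Y) = 1 - Δ * (C * M⁻¹ * B + D) := by
    have e1 : (1 - Δ * D) * (1 - Y) = 1 - Δ * D - (Y - Δ * D * Y) := by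
      rw [Matrix.sub_mul, Matrix.mul_sub, Matrix.mul_sub]
      simp only [Matrix.one_mul, Matrix.mul_one]
      abel
    have e2 : Y - Δ * D * Y = Δ * (C * (M⁻¹ * B)) := by
      have e3 : Y - Δ * D * Y = (Δ * S⁻¹ - Δ * (D * (Δ * S⁻¹))) * (C * (M⁻¹ * B)) := by
        rw [hYdef, Matrix.sub_mul]; simp only [Matrix.mul_assoc]
      rw [e3, hΔS]
    rw [e1, e2, Matrix.mul_add]
    simp only [Matrix.mul_assoc]
    abel
  calc (M - B * Δ * S⁻¹ * C).det * (1 - Δ * D).det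
      = M.det * ((1 - Δ * D).det * (1 - Y).det) := by
        rw [h1, Matrix.det_mul, h2]; ring
    _ = M.det * ((1 - Δ * D) * (1 - Y)).det := by rw [Matrix.det_mul]
    _ = M.det * (1 - Δ * (C * M⁻¹ * B + D)).det := by rw [h3]

lemma exists_unit_norm_apply_eq {m p : ℕ}
    (g : EuclideanSpace ℂ (Fin m) →L[ℂ] EuclideanSpace ℂ (Fin p)) (hg : 0 < ‖g‖) :
    ∃ x : EuclideanSpace ℂ (Fin m), ‖x‖ = 1 ∧ ‖g x‖ = ‖g‖ := by
  have hnt : Nontrivial (EuclideanSpace ℂ (Fin m)) := by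
    by_contra h
    rw [not_nontrivial_iff_subsingleton] at h
    have hg0 : g = 0 := by
      ext1 x
      rw [Subsingleton.elim x 0]
      simp
    rw [hg0] at hg
    simp at hg
  obtain ⟨x₀, hx₀⟩ := exists_norm_eq (EuclideanSpace ℂ (Fin m)) (zero_le_one (α := ℝ))
  have hcs : IsCompact (sphere (0 : EuclideanSpace ℂ (Fin m)) 1) := isCompact_sphere _ _
  have hne : (sphere (0 : EuclideanSpace ℂ (Fin m)) 1).Nonempty :=
    ⟨x₀, by simpa using hx₀⟩
  obtain ⟨x, hxs, hmax⟩ :=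
    hcs.exists_isMaxOn hne ((continuous_norm.comp g.continuous).continuousOn)
  have hx1 : ‖x‖ = 1 := by simpa using hxs
  refine ⟨x, hx1, le_antisymm (by simpa [hx1] using g.le_opNorm x) ?_⟩
  refine g.opNorm_le_bound (norm_nonneg _) fun y => ?_
  rcases eq_or_ne y 0 with rfl | hy
  · simp
  · have hyn : (0 : ℝ) < ‖y‖ := norm_pos_iff.2 hy
    have hmem : (‖y‖⁻¹ : ℝ) • y ∈ sphere (0 : EuclideanSpace ℂ (Fin m)) 1 := by
      simp [norm_smul, abs_of_pos (inv_pos.2 hyn), inv_mul_cancel₀ hyn.ne']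
    have h2 : ‖y‖⁻¹ * ‖g y‖ ≤ ‖g x‖ := by
      have := hmax hmem
      simpa [norm_smul, abs_of_pos (inv_pos.2 hyn)] using this
    calc ‖g y‖ = ‖y‖ * (‖y‖⁻¹ * ‖g y‖) := by field_simp
      _ ≤ ‖y‖ * ‖g x‖ := mul_le_mul_of_nonneg_left h2 hyn.le
      _ = ‖g x‖ * ‖y‖ := mul_comm _ _

end Aux

section Main

open scoped Matrix.Norms.L2Operator

theorem svSet_eq_tf_characterization {n m p : ℕ} (A : Matrix (Fin n) (Fin n) ℂ)
    (B : Matrix (Fin n) (Fin m) ℂ) (C : Matrix (Fin p) (Fin n) ℂ)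
    (D : Matrix (Fin p) (Fin m) ℂ) (E : Matrix (Fin n) (Fin n) ℂ)
    (hE : IsUnit E) (ε : ℝ) (hε : 0 < ε) (hεD : ε * specNorm D < 1) :
    svSet ε A B C D E =
      {z : ℂ | (z • E - A).det = 0} ∪
      {z : ℂ | (z • E - A).det ≠ 0 ∧ ε⁻¹ ≤ specNorm (transferFn A B C D E z)} := by
  rw [specNorm_eq_l2norm] at hεD
  ext z
  simp only [svSet, mem_setOf_eq, mem_union]
  constructor
  · rintro ⟨Δ, hΔ, hdet⟩
    by_cases hz : (z • E - A).det = 0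
    · exact Or.inl hz
    · right
      refine ⟨hz, ?_⟩
      rw [specNorm_eq_l2norm] at hΔ ⊢
      set G : Matrix (Fin p) (Fin m) ℂ := transferFn A B C D E z with hGdef
      have hDΔ : ‖D * Δ‖ < 1 := by
        calc ‖D * Δ‖ ≤ ‖D‖ * ‖Δ‖ := Matrix.l2_opNorm_mul D Δ
          _ ≤ ‖D‖ * ε := mul_le_mul_of_nonneg_left hΔ (norm_nonneg D)
          _ = ε * ‖D‖ := mul_comm _ _
          _ < 1 := hεD
      have hS : (1 - D * Δ).det ≠ 0 := det_one_sub_ne_zero_of_norm_lt _ hDΔ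
      have hkey := det_key (z • E - A) B C D Δ hz hS
      have hper : z • E - pertSys A B C D Δ
          = (z • E - A) - B * Δ * (1 - D * Δ)⁻¹ * C := by
        rw [pertSys, sub_add_eq_sub_sub]
      rw [hper] at hdet
      rw [hdet, zero_mul] at hkey
      have hG0 : (1 - Δ * G).det = 0 := by
        rcases mul_eq_zero.mp hkey.symm with h | h
        · exact absurd h hz
        · exact h
      obtain ⟨v, hv0, hv⟩ := (Matrix.exists_mulVec_eq_zero_iff).2 hG0
      have hvv : (Δ * G) *ᵥ v = v := by
        have h1 : v - (Δ * G) *ᵥ v = 0 := by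
          simpa [Matrix.sub_mulVec, Matrix.one_mulVec] using hv
        exact (sub_eq_zero.mp h1).symm
      set x : EuclideanSpace ℂ (Fin m) := (EuclideanSpace.equiv (Fin m) ℂ).symm v with hx
      have hxn : 0 < ‖x‖ := by
        rw [norm_pos_iff]
        simpa [hx] using hv0
      have hb := Matrix.l2_opNorm_mulVec (Δ * G) x
      rw [show (Δ * G) *ᵥ (x : Fin m → ℂ) = v from hvv] at hb
      have hb' : ‖x‖ ≤ ‖Δ * G‖ * ‖x‖ := hb
      have h1 : (1 : ℝ) ≤ ‖Δ * G‖ := by nlinarith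
      have h2 : ‖Δ * G‖ ≤ ε * ‖G‖ := by
        calc ‖Δ * G‖ ≤ ‖Δ‖ * ‖G‖ := Matrix.l2_opNorm_mul Δ G
          _ ≤ ε * ‖G‖ := mul_le_mul_of_nonneg_right hΔ (norm_nonneg G)
      have h3 : (1 : ℝ) ≤ ε * ‖G‖ := h1.trans h2
      nlinarith [mul_inv_cancel₀ hε.ne', norm_nonneg G]
  · rintro (hz | ⟨hz, hG⟩)
    · refine ⟨0, by rw [specNorm_eq_l2norm]; simp [hε.le], ?_⟩
      have : pertSys A B C D 0 = A := by simp [pertSys]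
      rw [this]
      exact hz
    · rw [specNorm_eq_l2norm] at hG
      set G : Matrix (Fin p) (Fin m) ℂ := transferFn A B C D E z with hGdef
      set g : EuclideanSpace ℂ (Fin m) →L[ℂ] EuclideanSpace ℂ (Fin p) :=
        (Matrix.toEuclideanLin G).toContinuousLinearMap with hgdef
      have hgn : ‖g‖ = ‖G‖ := rfl
      have hGpos : (0 : ℝ) < ‖G‖ := lt_of_lt_of_le (inv_pos.2 hε) hG
      set r : ℝ := ‖G‖ with hr
      have hrinv : r⁻¹ ≤ ε := by
        have := inv_anti₀ (inv_pos.2 hε) hG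
        rwa [inv_inv] at this
      obtain ⟨x, hx1, hgx⟩ := exists_unit_norm_apply_eq g (hgn ▸ hGpos)
      set u : EuclideanSpace ℂ (Fin p) := g x with hu
      have hun : ‖u‖ = r := by rw [hu, hgx, hgn]
      set c : ℂ := ((r : ℂ) ^ 2)⁻¹ with hc
      set Δ : Matrix (Fin m) (Fin p) ℂ :=
        Matrix.of fun i j => c * x i * (starRingEnd ℂ) (u j) with hΔdef
      have hmv : ∀ w : Fin p → ℂ,
          Δ *ᵥ w = (c * ∑ j, (starRingEnd ℂ) (u j) * w j) • (x : Fin m → ℂ) := by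
        intro w
        funext i
        simp only [hΔdef, Matrix.mulVec, dotProduct, Matrix.of_apply,
          PiLp.smul_apply, Pi.smul_apply, smul_eq_mul, Finset.mul_sum, Finset.sum_mul]
        refine Finset.sum_congr rfl fun j _ => by ring
      have hinner : ∀ w : EuclideanSpace ℂ (Fin p),
          (inner ℂ u w : ℂ) = ∑ j, (starRingEnd ℂ) (u j) * w j := by
        intro w
        simp [PiLp.inner_apply, RCLike.inner_apply, mul_comm]
      have happ : ∀ w : EuclideanSpace ℂ (Fin p),
          (Matrix.toEuclideanLin Δ).toContinuousLinearMap w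
            = (c * (inner ℂ u w : ℂ)) • x := by
        intro w
        ext i
        have h := congrFun (hmv (w : Fin p → ℂ)) i
        rw [hinner w]
        exact h
      have hcnorm : ‖c‖ = (r ^ 2)⁻¹ := by
        rw [hc]
        rw [show ((r : ℂ) ^ 2)⁻¹ = ((((r ^ 2)⁻¹ : ℝ)) : ℂ) by push_cast; ring]
        rw [Complex.norm_real, Real.norm_eq_abs, abs_of_pos (by positivity)]
      have hΔnorm : specNorm Δ ≤ ε := by
        rw [specNorm]
        refine ContinuousLinearMap.opNorm_le_bound _ hε.le fun w => ?_
        rw [happ w, norm_smul, hx1, mul_one, norm_mul, hcnorm]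
        calc (r ^ 2)⁻¹ * ‖(inner ℂ u w : ℂ)‖
            ≤ (r ^ 2)⁻¹ * (‖u‖ * ‖w‖) := by
              exact mul_le_mul_of_nonneg_left (norm_inner_le_norm u w) (by positivity)
          _ = r⁻¹ * ‖w‖ := by rw [hun]; field_simp
          _ ≤ ε * ‖w‖ := mul_le_mul_of_nonneg_right hrinv (norm_nonneg w)
      have huf : G *ᵥ (x : Fin m → ℂ) = (u : Fin p → ℂ) := rfl
      have hev : (1 - Δ * G) *ᵥ (x : Fin m → ℂ) = 0 := by
        rw [Matrix.sub_mulVec, Matrix.one_mulVec, ← Matrix.mulVec_mulVec, huf, hmv]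
        have hsum : (∑ j, (starRingEnd ℂ) (u j) * (u j)) = ((r : ℂ)) ^ 2 := by
          rw [← hinner u, inner_self_eq_norm_sq_to_K, hun]
          norm_cast
        rw [hsum, hc, inv_mul_cancel₀ (by
          simp only [ne_eq, pow_eq_zero_iff, OfNat.ofNat_ne_zero, not_false_eq_true,
            Complex.ofReal_eq_zero]
          exact hGpos.ne'), one_smul, sub_self]
      have hx0 : (x : Fin m → ℂ) ≠ 0 := by
        intro h
        have : x = 0 := by ext i; simpa using congrFun h i
        rw [this] at hx1
        simp at hx1
      have hG0 : (1 - Δ * G).det = 0 :=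
        (Matrix.exists_mulVec_eq_zero_iff).1 ⟨(x : Fin m → ℂ), hx0, hev⟩
      have hDΔ : ‖D * Δ‖ < 1 := by
        have hΔn : ‖Δ‖ ≤ ε := by rw [← specNorm_eq_l2norm]; exact hΔnorm
        calc ‖D * Δ‖ ≤ ‖D‖ * ‖Δ‖ := Matrix.l2_opNorm_mul D Δ
          _ ≤ ‖D‖ * ε := mul_le_mul_of_nonneg_left hΔn (norm_nonneg D)
          _ = ε * ‖D‖ := mul_comm _ _
          _ < 1 := hεD
      have hS : (1 - D * Δ).det ≠ 0 := det_one_sub_ne_zero_of_norm_lt _ hDΔ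
      have hSd : (1 - Δ * D).det ≠ 0 := by
        rwa [Matrix.det_one_sub_mul_comm]
      have hkey := det_key (z • E - A) B C D Δ hz hS
      rw [show (1 : Matrix (Fin m) (Fin m) ℂ) - Δ * (C * (z • E - A)⁻¹ * B + D)
          = 1 - Δ * G from by rw [hGdef, transferFn], hG0, mul_zero] at hkey
      refine ⟨Δ, hΔnorm, ?_⟩
      have hper : z • E - pertSys A B C D Δ
          = (z • E - A) - B * Δ * (1 - D * Δ)⁻¹ * C := by
        rw [pertSys, sub_add_eq_sub_sub]
      rw [hper]
      rcases mul_eq_zero.mp hkey with h | h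
      · exact h
      · exact absurd h hSd

end Main
end

section
/- Let ε > 0 with ε‖D‖₂ < 1, and suppose λ is a boundary point of the ε-spectral value set σ_ε(A,B,C,D,E) with λ ∉ spec(A,E). If Δ ∈ ℂ^{m×p} satisfies ‖Δ‖₂ ≤ ε and λ ∈ spec(M(Δ),E), then ‖Δ‖₂ = ε. -/
open Matrix Filter Set

/-! ### Auxiliary lemmas -/

noncomputable def toCLM {p m : ℕ} (A : Matrix (Fin p) (Fin m) ℂ) :
    EuclideanSpace ℂ (Fin m) →L[ℂ] EuclideanSpace ℂ (Fin p) :=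
  (Matrix.toEuclideanLin A).toContinuousLinearMap

lemma specNorm_eq {p m : ℕ} (A : Matrix (Fin p) (Fin m) ℂ) : specNorm A = ‖toCLM A‖ := rfl

lemma toCLM_apply {p m : ℕ} (A : Matrix (Fin p) (Fin m) ℂ) (x : EuclideanSpace ℂ (Fin m)) :
    toCLM A x = (WithLp.equiv 2 (Fin p → ℂ)).symm (A *ᵥ (WithLp.equiv 2 (Fin m → ℂ)) x) := rfl

lemma toCLM_mul {p m q : ℕ} (A : Matrix (Fin p) (Fin m) ℂ) (B : Matrix (Fin m) (Fin q) ℂ) :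
    toCLM (A * B) = (toCLM A).comp (toCLM B) := by
  ext x
  simp [toCLM_apply, Matrix.mulVec_mulVec]

lemma specNorm_nonneg {p m : ℕ} (A : Matrix (Fin p) (Fin m) ℂ) : 0 ≤ specNorm A :=
  norm_nonneg _

lemma specNorm_mul_le {p m q : ℕ} (A : Matrix (Fin p) (Fin m) ℂ) (B : Matrix (Fin m) (Fin q) ℂ) :
    specNorm (A * B) ≤ specNorm A * specNorm B := by
  rw [specNorm_eq, specNorm_eq, specNorm_eq, toCLM_mul]
  exact ContinuousLinearMap.opNorm_comp_le _ _

lemma norm_toCLM_apply_le {p m : ℕ} (A : Matrix (Fin p) (Fin m) ℂ) (x : EuclideanSpace ℂ (Fin m)) :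
    ‖toCLM A x‖ ≤ specNorm A * ‖x‖ := (toCLM A).le_opNorm x

lemma det_one_sub_ne_zero {p : ℕ} (X : Matrix (Fin p) (Fin p) ℂ) (hX : specNorm X < 1) :
    (1 - X).det ≠ 0 := by
  intro h
  obtain ⟨v, hv0, hv⟩ := (Matrix.exists_mulVec_eq_zero_iff).2 h
  set w : EuclideanSpace ℂ (Fin p) := (WithLp.equiv 2 (Fin p → ℂ)).symm v with hw
  have hw0 : w ≠ 0 := by simpa [hw] using hv0
  have hXw : toCLM X w = w := by
    have hvv : X *ᵥ v = v := by
      have := hv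
      rw [Matrix.sub_mulVec, Matrix.one_mulVec, sub_eq_zero] at this
      exact this.symm
    simp [toCLM_apply, hw, hvv]
  have h1 : ‖w‖ ≤ specNorm X * ‖w‖ := by
    conv_lhs => rw [← hXw]
    exact norm_toCLM_apply_le X w
  have h2 : (0:ℝ) < ‖w‖ := norm_pos_iff.2 hw0
  nlinarith

lemma key_det {n m p : ℕ} (A : Matrix (Fin n) (Fin n) ℂ) (B : Matrix (Fin n) (Fin m) ℂ)
    (C : Matrix (Fin p) (Fin n) ℂ) (D : Matrix (Fin p) (Fin m) ℂ)
    (E : Matrix (Fin n) (Fin n) ℂ) (Δ : Matrix (Fin m) (Fin p) ℂ) (z : ℂ)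
    (hS : (z • E - A).det ≠ 0) (hD : (1 - D * Δ).det ≠ 0) :
    (z • E - pertSys A B C D Δ).det * (1 - D * Δ).det
      = (z • E - A).det * (1 - transferFn A B C D E z * Δ).det := by
  set S := z • E - A with hSdef
  have hSu : IsUnit S.det := isUnit_iff_ne_zero.2 hS
  have hDu : IsUnit (1 - D * Δ).det := isUnit_iff_ne_zero.2 hD
  set K := (1 - D * Δ)⁻¹ with hK
  have hpert : z • E - pertSys A B C D Δ = S * (1 - S⁻¹ * (B * Δ * K * C)) := by
    rw [Matrix.mul_sub, Matrix.mul_one, ← Matrix.mul_assoc, Matrix.mul_nonsing_inv _ hSu,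
      Matrix.one_mul, pertSys, hSdef]
    abel
  have h1 : (z • E - pertSys A B C D Δ).det = S.det * (1 - C * (S⁻¹ * (B * Δ * K))).det := by
    rw [hpert, Matrix.det_mul]
    congr 1
    have h := Matrix.det_one_sub_mul_comm (S⁻¹ * (B * Δ * K)) C
    rw [← h]
    simp only [Matrix.mul_assoc]
  have h2 : (1 - C * (S⁻¹ * (B * Δ * K))) * (1 - D * Δ)
      = 1 - transferFn A B C D E z * Δ := by
    have hKD : K * (1 - D * Δ) = 1 := Matrix.nonsing_inv_mul _ hDu
    rw [Matrix.sub_mul, Matrix.one_mul, transferFn, ← hSdef]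
    have h3 : C * (S⁻¹ * (B * Δ * K)) * (1 - D * Δ) = C * S⁻¹ * B * Δ := by
      calc C * (S⁻¹ * (B * Δ * K)) * (1 - D * Δ)
          = C * S⁻¹ * B * Δ * (K * (1 - D * Δ)) := by simp only [Matrix.mul_assoc]
        _ = C * S⁻¹ * B * Δ := by rw [hKD, Matrix.mul_one]
    rw [h3, Matrix.add_mul]
    abel
  calc (z • E - pertSys A B C D Δ).det * (1 - D * Δ).det
      = S.det * ((1 - C * (S⁻¹ * (B * Δ * K))).det * (1 - D * Δ).det) := by rw [h1]; ring
    _ = S.det * ((1 - C * (S⁻¹ * (B * Δ * K))) * (1 - D * Δ)).det := by rw [Matrix.det_mul]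
    _ = S.det * (1 - transferFn A B C D E z * Δ).det := by rw [h2]

lemma one_le_of_det_eq_zero {p m : ℕ} (G : Matrix (Fin p) (Fin m) ℂ)
    (Δ : Matrix (Fin m) (Fin p) ℂ) (h : (1 - G * Δ).det = 0) :
    1 ≤ specNorm G * specNorm Δ := by
  by_contra hlt
  push_neg at hlt
  exact det_one_sub_ne_zero (G * Δ) (lt_of_le_of_lt (specNorm_mul_le G Δ) hlt) h

lemma mem_svSet_of_gt {n m p : ℕ} (A : Matrix (Fin n) (Fin n) ℂ) (B : Matrix (Fin n) (Fin m) ℂ)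
    (C : Matrix (Fin p) (Fin n) ℂ) (D : Matrix (Fin p) (Fin m) ℂ)
    (E : Matrix (Fin n) (Fin n) ℂ) (ε : ℝ) (hε : 0 < ε) (hεD : ε * specNorm D < 1)
    (w : ℂ) (hdet : (w • E - A).det ≠ 0)
    (hG : 1 < ε * specNorm (transferFn A B C D E w)) :
    w ∈ svSet ε A B C D E := by
  set G := transferFn A B C D E w with hGdef
  set L := toCLM G with hL
  have hLnorm : ε⁻¹ < ‖L‖ := by
    rw [← specNorm_eq, inv_lt_iff_one_lt_mul₀ hε, mul_comm]
    exact hG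
  have hnot : ¬ ‖L‖ ≤ ε⁻¹ := not_le.2 hLnorm
  have hex : ∃ x, ε⁻¹ * ‖x‖ < ‖L x‖ := by
    by_contra hc
    push_neg at hc
    exact hnot (L.opNorm_le_bound (le_of_lt (inv_pos.2 hε)) fun x => hc x)
  obtain ⟨u, hu⟩ := hex
  set y := L u with hy
  have hypos : (0:ℝ) < ‖y‖ := lt_of_le_of_lt (by positivity) hu
  have hy0 : y ≠ 0 := norm_pos_iff.1 hypos
  set c : ℂ := ((‖y‖ : ℂ) ^ 2)⁻¹ with hc
  set Δ' : Matrix (Fin m) (Fin p) ℂ :=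
    Matrix.of (fun i j => c * ((WithLp.equiv 2 (Fin m → ℂ)) u i
      * (starRingEnd ℂ) ((WithLp.equiv 2 (Fin p → ℂ)) y j))) with hΔ'
  set u' := (WithLp.equiv 2 (Fin m → ℂ)) u with hu'
  set y' := (WithLp.equiv 2 (Fin p → ℂ)) y with hy'
  have hinner : ∀ x : EuclideanSpace ℂ (Fin p),
      (inner ℂ y x : ℂ) = ∑ j, (starRingEnd ℂ) (y' j) * (WithLp.equiv 2 (Fin p → ℂ)) x j := by
    intro x
    rw [PiLp.inner_apply]
    simp only [RCLike.inner_apply']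
    rfl
  have hact : ∀ x : EuclideanSpace ℂ (Fin p),
      Δ' *ᵥ ((WithLp.equiv 2 (Fin p → ℂ)) x) = (c * inner ℂ y x) • u' := by
    intro x
    funext i
    simp only [Matrix.mulVec, dotProduct, hΔ', Matrix.of_apply, Pi.smul_apply,
      smul_eq_mul, hinner x, Finset.mul_sum, Finset.sum_mul]
    apply Finset.sum_congr rfl
    intro j _
    ring
  have hyy : (inner ℂ y y : ℂ) = (‖y‖ : ℂ) ^ 2 := inner_self_eq_norm_sq_to_K y
  have hyne : (‖y‖ : ℂ) ≠ 0 := Complex.ofReal_ne_zero.2 (norm_ne_zero_iff.2 hy0)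
  have hΔy : Δ' *ᵥ y' = u' := by
    rw [hy', hact y, hyy, hc, inv_mul_cancel₀ (pow_ne_zero 2 hyne), one_smul]
  have hΔnorm : specNorm Δ' ≤ ‖u‖ / ‖y‖ := by
    rw [specNorm_eq]
    apply ContinuousLinearMap.opNorm_le_bound _ (by positivity)
    intro x
    have hx : toCLM Δ' x = (c * inner ℂ y x) • u := by
      rw [toCLM_apply, hact x]
      rfl
    rw [hx, norm_smul]
    have hcs : ‖(inner ℂ y x : ℂ)‖ ≤ ‖y‖ * ‖x‖ := norm_inner_le_norm y x
    have hcn : ‖c‖ = (‖y‖^2)⁻¹ := by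
      rw [hc, norm_inv]
      norm_num
    rw [norm_mul, hcn]
    calc (‖y‖ ^ 2)⁻¹ * ‖(inner ℂ y x : ℂ)‖ * ‖u‖
        ≤ (‖y‖ ^ 2)⁻¹ * (‖y‖ * ‖x‖) * ‖u‖ := by
          apply mul_le_mul_of_nonneg_right _ (norm_nonneg u)
          exact mul_le_mul_of_nonneg_left hcs (by positivity)
      _ = ‖u‖ / ‖y‖ * ‖x‖ := by
          field_simp
  have hΔlt : specNorm Δ' < ε := by
    apply lt_of_le_of_lt hΔnorm
    rw [div_lt_iff₀ hypos]
    calc ‖u‖ = ε * (ε⁻¹ * ‖u‖) := by field_simp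
      _ < ε * ‖y‖ := by
          apply mul_lt_mul_of_pos_left hu hε
  have hGu : G *ᵥ u' = y' := by
    rw [hy', hy]
    rfl
  have hdet0 : (1 - G * Δ').det = 0 := by
    rw [← Matrix.exists_mulVec_eq_zero_iff]
    refine ⟨y', ?_, ?_⟩
    · simpa [hy'] using hy0
    · rw [Matrix.sub_mulVec, Matrix.one_mulVec, ← Matrix.mulVec_mulVec, hΔy, hGu, sub_self]
  have hDΔ : (1 - D * Δ').det ≠ 0 := by
    apply det_one_sub_ne_zero
    calc specNorm (D * Δ') ≤ specNorm D * specNorm Δ' := specNorm_mul_le D Δ'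
      _ ≤ specNorm D * ε := mul_le_mul_of_nonneg_left (le_of_lt hΔlt) (specNorm_nonneg D)
      _ = ε * specNorm D := mul_comm _ _
      _ < 1 := hεD
  refine ⟨Δ', le_of_lt hΔlt, ?_⟩
  have hkey := key_det A B C D E Δ' w hdet hDΔ
  rw [← hGdef, hdet0, mul_zero] at hkey
  rcases mul_eq_zero.1 hkey with h | h
  · exact h
  · exact absurd h hDΔ

lemma continuous_specNorm {p m : ℕ} :
    Continuous fun M : Matrix (Fin p) (Fin m) ℂ => specNorm M := by
  have hlin : Continuous fun M : Matrix (Fin p) (Fin m) ℂ => toCLM M := by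
    let Lm : Matrix (Fin p) (Fin m) ℂ →ₗ[ℂ]
        (EuclideanSpace ℂ (Fin m) →L[ℂ] EuclideanSpace ℂ (Fin p)) :=
      { toFun := toCLM
        map_add' := by
          intro M N; ext x; simp [toCLM_apply, Matrix.add_mulVec]
        map_smul' := by
          intro c M; ext x; simp [toCLM_apply, Matrix.smul_mulVec] }
    exact Lm.continuous_of_finiteDimensional
  exact continuous_norm.comp hlin

lemma continuousAt_transferFn {n m p : ℕ} (A : Matrix (Fin n) (Fin n) ℂ)
    (B : Matrix (Fin n) (Fin m) ℂ) (C : Matrix (Fin p) (Fin n) ℂ)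
    (D : Matrix (Fin p) (Fin m) ℂ) (E : Matrix (Fin n) (Fin n) ℂ) (z : ℂ)
    (hz : (z • E - A).det ≠ 0) :
    ContinuousAt (fun w : ℂ => transferFn A B C D E w) z := by
  have h1 : Continuous (fun w : ℂ => w • E - A) :=
    (continuous_id.smul continuous_const).sub continuous_const
  have hinv : ContinuousAt Ring.inverse (z • E - A).det := by
    rw [Ring.inverse_eq_inv']
    exact continuousAt_inv₀ hz
  have h2 : ContinuousAt (fun w : ℂ => (w • E - A)⁻¹) z :=
    ContinuousAt.comp (x := z) (f := fun w : ℂ => w • E - A)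
      (continuousAt_matrix_inv _ hinv) h1.continuousAt
  have h3 : Continuous (fun M : Matrix (Fin n) (Fin n) ℂ => C * M * B + D) :=
    ((continuous_const.matrix_mul continuous_id).matrix_mul continuous_const).add
      continuous_const
  exact ContinuousAt.comp (x := z) (f := fun w : ℂ => (w • E - A)⁻¹)
    h3.continuousAt h2

theorem boundary_perturbation_norm {n m p : ℕ} (A : Matrix (Fin n) (Fin n) ℂ)
    (B : Matrix (Fin n) (Fin m) ℂ) (C : Matrix (Fin p) (Fin n) ℂ)
    (D : Matrix (Fin p) (Fin m) ℂ) (E : Matrix (Fin n) (Fin n) ℂ)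
    (hE : IsUnit E) (ε : ℝ) (hε : 0 < ε) (hεD : ε * specNorm D < 1)
    (z : ℂ) (hzb : z ∈ frontier (svSet ε A B C D E)) (hz : (z • E - A).det ≠ 0)
    (Δ : Matrix (Fin m) (Fin p) ℂ) (hΔ : specNorm Δ ≤ ε)
    (hzΔ : (z • E - pertSys A B C D Δ).det = 0) :
    specNorm Δ = ε := by
  by_contra hne
  have hΔlt : specNorm Δ < ε := lt_of_le_of_ne hΔ hne
  -- 1 - D Δ is invertible
  have hDd : (1 - D * Δ).det ≠ 0 := by
    apply det_one_sub_ne_zero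
    calc specNorm (D * Δ) ≤ specNorm D * specNorm Δ := specNorm_mul_le D Δ
      _ ≤ specNorm D * ε := mul_le_mul_of_nonneg_left hΔ (specNorm_nonneg D)
      _ = ε * specNorm D := mul_comm _ _
      _ < 1 := hεD
  -- det (1 - G Δ) = 0
  have hkey := key_det A B C D E Δ z hz hDd
  rw [hzΔ, zero_mul] at hkey
  have hGΔ : (1 - transferFn A B C D E z * Δ).det = 0 := by
    rcases mul_eq_zero.1 hkey.symm with h | h
    · exact absurd h hz
    · exact h
  have h1 : 1 ≤ specNorm (transferFn A B C D E z) * specNorm Δ :=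
    one_le_of_det_eq_zero _ _ hGΔ
  have hGpos : 0 < specNorm (transferFn A B C D E z) := by
    nlinarith [specNorm_nonneg Δ, specNorm_nonneg (transferFn A B C D E z), hΔlt, hε]
  have hGz : 1 < ε * specNorm (transferFn A B C D E z) := by
    nlinarith [mul_lt_mul_of_pos_left hΔlt hGpos]
  -- z is in the interior of svSet, contradiction with frontier
  have hd : ∀ᶠ w in nhds z, (w • E - A).det ≠ 0 := by
    have hc : Continuous fun w : ℂ => (w • E - A).det :=
      ((continuous_id.smul continuous_const).sub continuous_const).matrix_det
    exact hc.continuousAt.eventually_ne hz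
  have hgc : ContinuousAt (fun w : ℂ => ε * specNorm (transferFn A B C D E w)) z :=
    continuousAt_const.mul
      (ContinuousAt.comp (x := z) (f := fun w : ℂ => transferFn A B C D E w)
        continuous_specNorm.continuousAt (continuousAt_transferFn A B C D E z hz))
  have hg : ∀ᶠ w in nhds z, 1 < ε * specNorm (transferFn A B C D E w) :=
    hgc.eventually (eventually_gt_nhds hGz)
  have hmem : ∀ᶠ w in nhds z, w ∈ svSet ε A B C D E := by
    filter_upwards [hd, hg] with w hw1 hw2
    exact mem_svSet_of_gt A B C D E ε hε hεD w hw1 hw2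
  exact hzb.2 (mem_interior_iff_mem_nhds.2 hmem)
end
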